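/- Let b ∈ G be non-mixed, i.e., t_{b,i} ≥ 2 for some i. Then the type vector of b has at most one zero after I_b: #{i ∈ {0,…,n} : i > I_b and t_{b,i} = 0} ≤ 1. -/

import Mathlib

open Finset

/-- The partial sum `Σ_{k=0}^{i-1} a_{k j}` as an integer. -/
def psum (a : ℕ → ℕ → ℕ) (i j : ℕ) : ℤ := ∑ k ∈ Finset.range i, (a k j : ℤ)

/-- `b ∈ B`, i.e. `0 ≤ b_j < Σ_{i=0}^{n} a_{ij}` for all `j`. -/
def memB (n : ℕ) (a : ℕ → ℕ → ℕ) (b : ℕ → ℤ) : Prop :=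
  ∀ j < n, 0 ≤ b j ∧ b j < psum a (n + 1) j

/-- `φ` is the type function of `b`:
`Σ_{k=0}^{φ(j)-1} a_{kj} ≤ b_j < Σ_{k=0}^{φ(j)} a_{kj}` for all `j < n`. -/
def IsTypeFun (n : ℕ) (a : ℕ → ℕ → ℕ) (b : ℕ → ℤ) (φ : ℕ → ℕ) : Prop :=
  ∀ j < n, φ j ≤ n ∧ psum a (φ j) j ≤ b j ∧ b j < psum a (φ j + 1) j

/-- The type vector `t_{b,i} = #{j : φ_b(j) = i}`. -/
def typeVec (n : ℕ) (φ : ℕ → ℕ) (i : ℕ) : ℕ :=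
  ((Finset.range n).filter fun j => φ j = i).card

/-- `ib` is the row content of a point with type function `φ`:
the largest `i ∈ {0,…,n}` with `t_{b,i} = 0`. -/
def IsRowContent (n : ℕ) (φ : ℕ → ℕ) (ib : ℕ) : Prop :=
  ib ≤ n ∧ typeVec n φ ib = 0 ∧ ∀ i ≤ n, typeVec n φ i = 0 → i ≤ ib

/-- The vector `a(b)`: `a(b)_j = 0` if `φ_b(j) < i(b)` and `a(b)_j = a_{i(b) j}` otherwise. -/
def ashift (a : ℕ → ℕ → ℕ) (φ : ℕ → ℕ) (ib j : ℕ) : ℤ :=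
  if φ j < ib then 0 else (a ib j : ℤ)

/-- `b' ∈ R(b) = {b - a(b) + c : c ∈ A_{i(b)}}`. -/
def memR (n : ℕ) (a : ℕ → ℕ → ℕ) (b : ℕ → ℤ) (φ : ℕ → ℕ) (ib : ℕ) (b' : ℕ → ℤ) : Prop :=
  ∀ j < n, b j - ashift a φ ib j ≤ b' j ∧ b' j ≤ b j - ashift a φ ib j + (a ib j : ℤ)

/-- The greedy condition: `Σ_{i=0}^{I} t_{b,i} ≤ I + 1` for all `I < n`. -/
def memG (n : ℕ) (φ : ℕ → ℕ) : Prop :=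
  ∀ I < n, ∑ i ∈ Finset.range (I + 1), typeVec n φ i ≤ I + 1

/-- A point is mixed if `t_{b,i} ≤ 1` for all `i ∈ {0,…,n}`. -/
def Mixed (n : ℕ) (φ : ℕ → ℕ) : Prop := ∀ i ≤ n, typeVec n φ i ≤ 1

/-- `Ib = I_b`: for non-mixed `b` the largest `i` with `t_{b,i} ≥ 2`; for mixed `b`, `0`. -/
def IsIb (n : ℕ) (φ : ℕ → ℕ) (Ib : ℕ) : Prop :=
  (2 ≤ typeVec n φ Ib ∧ ∀ i, 2 ≤ typeVec n φ i → i ≤ Ib) ∨ (Mixed n φ ∧ Ib = 0)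

/-- `g_b = #{i < I_b : t_{b,i} = 0}`. -/
def gval (n : ℕ) (φ : ℕ → ℕ) (Ib : ℕ) : ℕ :=
  ((Finset.range Ib).filter fun i => typeVec n φ i = 0).card

theorem at_most_one_zero_after_Ib
    (n : ℕ) (hn : 0 < n) (a : ℕ → ℕ → ℕ)
    (hpos : ∀ i ≤ n, ∀ j < n, 0 < a i j)
    (hord : ∀ j < n, ∀ i i' : ℕ, i ≤ i' → i' < n → a i j ≤ a i' j)
    (b : ℕ → ℤ) (hb : memB n a b)
    (φ : ℕ → ℕ) (hφ : IsTypeFun n a b φ)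
    (hG : memG n φ)
    (hnm : ∃ i ≤ n, 2 ≤ typeVec n φ i)
    (Ib : ℕ) (hIb : IsIb n φ Ib) :
    ((Finset.range (n + 1)).filter fun i => Ib < i ∧ typeVec n φ i = 0).card ≤ 1 := by
  classical
  obtain ⟨i0, hi0n, hi0⟩ := hnm
  obtain ⟨h2, hmax⟩ : 2 ≤ typeVec n φ Ib ∧ ∀ i, 2 ≤ typeVec n φ i → i ≤ Ib := by
    rcases hIb with h | ⟨hm, _⟩
    · exact h
    · exact absurd (hm i0 hi0n) (by omega)
  have hIbn : Ib ≤ n := by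
    have hne : ((Finset.range n).filter fun j => φ j = Ib).Nonempty := by
      rw [← Finset.card_pos]; unfold typeVec at h2; omega
    obtain ⟨j, hj⟩ := hne
    simp only [Finset.mem_filter, Finset.mem_range] at hj
    have := (hφ j hj.1).1
    omega
  set S := (Finset.range (n + 1)).filter fun i => Ib < i ∧ typeVec n φ i = 0 with hS
  by_cases hcase : Ib = n
  · have hSe : S = ∅ := by
      rw [hS]; apply Finset.filter_false_of_mem
      intro i hi; simp only [Finset.mem_range] at hi; omega
    simp [hSe]
  have hIbn' : Ib < n := lt_of_le_of_ne hIbn hcase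
  have htot : ∑ i ∈ Finset.range (n + 1), typeVec n φ i = n := by
    have h := Finset.card_eq_sum_card_fiberwise (s := Finset.range n)
      (t := Finset.range (n+1)) (f := φ)
      (fun j hj => by
        simp only [Finset.mem_coe, Finset.mem_range] at hj ⊢
        exact Nat.lt_succ_of_le (hφ j hj).1)
    simpa [typeVec, Finset.card_range] using h.symm
  have hsplit : Finset.range (n+1) = Finset.range (Ib+1) ∪ Finset.Ico (Ib+1) (n+1) := by
    ext i; simp only [Finset.mem_range, Finset.mem_union, Finset.mem_Ico]; omega
  have hdisj : Disjoint (Finset.range (Ib+1)) (Finset.Ico (Ib+1) (n+1)) := by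
    simp only [Finset.disjoint_left, Finset.mem_range, Finset.mem_Ico]
    intro i hi; omega
  have hgreedy := hG Ib hIbn'
  have hSsub : S ⊆ Finset.Ico (Ib+1) (n+1) := by
    intro i hi; simp only [hS, Finset.mem_filter, Finset.mem_range] at hi
    simp only [Finset.mem_Ico]; omega
  have hzeroS : ∀ i ∈ S, typeVec n φ i = 0 := by
    intro i hi; simp only [hS, Finset.mem_filter] at hi; exact hi.2.2
  have hsum_eq : ∑ i ∈ Finset.Ico (Ib+1) (n+1), typeVec n φ i
      = ∑ i ∈ Finset.Ico (Ib+1) (n+1) \ S, typeVec n φ i := by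
    refine (Finset.sum_subset Finset.sdiff_subset ?_).symm
    intro i hi hni
    simp only [Finset.mem_sdiff] at hni
    have : i ∈ S := by tauto
    exact hzeroS i this
  have hbound : ∀ i ∈ Finset.Ico (Ib+1) (n+1), typeVec n φ i ≤ 1 := by
    intro i hi
    simp only [Finset.mem_Ico] at hi
    by_contra h
    have := hmax i (by omega)
    omega
  have hsum_le : ∑ i ∈ Finset.Ico (Ib+1) (n+1) \ S, typeVec n φ i
      ≤ (Finset.Ico (Ib+1) (n+1) \ S).card := by
    calc ∑ i ∈ Finset.Ico (Ib+1) (n+1) \ S, typeVec n φ i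
        ≤ ∑ _i ∈ Finset.Ico (Ib+1) (n+1) \ S, 1 :=
          Finset.sum_le_sum (fun i hi => hbound i (Finset.sdiff_subset hi))
      _ = (Finset.Ico (Ib+1) (n+1) \ S).card := by simp
  have hcard : (Finset.Ico (Ib+1) (n+1) \ S).card
      = (Finset.Ico (Ib+1) (n+1)).card - S.card := Finset.card_sdiff_of_subset hSsub
  have hIcoCard : (Finset.Ico (Ib+1) (n+1)).card = n - Ib := by
    rw [Nat.card_Ico]; omega
  have hScard : S.card ≤ n - Ib := by
    have := Finset.card_le_card hSsub
    omega
  have : n = ∑ i ∈ Finset.range (Ib+1), typeVec n φ i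
      + ∑ i ∈ Finset.Ico (Ib+1) (n+1), typeVec n φ i := by
    rw [← Finset.sum_union hdisj, ← hsplit, htot]
  omega
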